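/- The group presented by generators $x_1, x_2$ and relations $x_1^{16k-2} = x_2^{(8k-1)(8k-3)}$, $x_2^{8k-1} = (x_1 x_2)^2$, $[x_2^{8k-1}, x_1] = 1$, together with the additional relation $x_1 = x_2^{4k-2}$, is the trivial group, for every positive integer $k$. -/

import Mathlib

def myRels (k : ℤ) : Set (FreeGroup (Fin 2)) :=
  { (FreeGroup.of 0) ^ (16 * k - 2) * ((FreeGroup.of 1) ^ ((8 * k - 1) * (8 * k - 3)))⁻¹,
    (FreeGroup.of 1) ^ (8 * k - 1) * ((FreeGroup.of 0 * FreeGroup.of 1) ^ (2 : ℤ))⁻¹,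
    (FreeGroup.of 1) ^ (8 * k - 1) * FreeGroup.of 0 *
      ((FreeGroup.of 1) ^ (8 * k - 1))⁻¹ * (FreeGroup.of 0)⁻¹,
    (FreeGroup.of 1) ^ (4 * k - 2) * (FreeGroup.of 0)⁻¹ }

lemma myRels_aux (k : ℤ) : ∀ x : PresentedGroup (myRels k), x = 1 := by
  set π : FreeGroup (Fin 2) →* PresentedGroup (myRels k) :=
    QuotientGroup.mk' (Subgroup.normalClosure (myRels k)) with hπ
  have hone : ∀ r ∈ myRels k, π r = 1 := fun r hr =>
    (QuotientGroup.eq_one_iff r).mpr (Subgroup.subset_normalClosure hr)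
  set a : PresentedGroup (myRels k) := π (FreeGroup.of 0) with haa
  set b : PresentedGroup (myRels k) := π (FreeGroup.of 1) with hbb
  have h4 : b ^ (4 * k - 2) * a⁻¹ = 1 := by
    have := hone _ (show (FreeGroup.of 1) ^ (4 * k - 2) * (FreeGroup.of 0)⁻¹ ∈ myRels k by
      simp [myRels])
    simpa [map_mul, map_zpow, map_inv] using this
  have ha : a = b ^ (4 * k - 2) := by
    have := mul_inv_eq_one.mp h4
    exact this.symm
  have h2 : b ^ (8 * k - 1) * ((a * b) ^ (2 : ℤ))⁻¹ = 1 := by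
    have := hone _ (show (FreeGroup.of 1) ^ (8 * k - 1) *
        ((FreeGroup.of 0 * FreeGroup.of 1) ^ (2 : ℤ))⁻¹ ∈ myRels k by simp [myRels])
    simpa [map_mul, map_zpow, map_inv] using this
  have h2' : b ^ (8 * k - 1) = (a * b) ^ (2 : ℤ) := mul_inv_eq_one.mp h2
  have hab : a * b = b ^ (4 * k - 1) := by
    rw [ha]
    calc b ^ (4 * k - 2) * b = b ^ (4 * k - 2) * b ^ (1 : ℤ) := by rw [zpow_one]
      _ = b ^ (4 * k - 1) := by rw [← zpow_add]; ring_nf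
  have hkey : b ^ (8 * k - 1) = b ^ (8 * k - 2) := by
    rw [h2', hab, ← zpow_mul]
    ring_nf
  have hb : b = 1 := by
    calc b = b ^ ((8 * k - 1) - (8 * k - 2) : ℤ) := by norm_num
      _ = b ^ (8 * k - 1) * (b ^ (8 * k - 2))⁻¹ := by rw [zpow_sub]
      _ = b ^ (8 * k - 2) * (b ^ (8 * k - 2))⁻¹ := by rw [hkey]
      _ = 1 := by group
  have ha1 : a = 1 := by rw [ha, hb, one_zpow]
  intro x
  refine QuotientGroup.induction_on x ?_
  intro w
  show π w = 1
  induction w using FreeGroup.induction_on with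
  | C1 => exact map_one π
  | of i =>
      fin_cases i
      · exact ha1
      · exact hb
  | inv_of i h => rw [map_inv, h, inv_one]
  | mul u v hu hv => rw [map_mul, hu, hv, one_mul]

/-- The group presented by generators `x₁, x₂` with relations
`x₁^(16k-2) = x₂^((8k-1)(8k-3))`, `x₂^(8k-1) = (x₁x₂)^2`, `[x₂^(8k-1), x₁] = 1`,
together with the additional relation `x₁ = x₂^(4k-2)`, is trivial for every `k ≥ 1`. -/
theorem presented_group_trivial (k : ℕ) (hk : 1 ≤ k) :
    ∀ x : PresentedGroup
      ({ (FreeGroup.of 0) ^ (16 * (k : ℤ) - 2) * ((FreeGroup.of 1) ^ ((8 * (k : ℤ) - 1) * (8 * (k : ℤ) - 3)))⁻¹,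
         (FreeGroup.of 1) ^ (8 * (k : ℤ) - 1) * ((FreeGroup.of 0 * FreeGroup.of 1) ^ (2 : ℤ))⁻¹,
         (FreeGroup.of 1) ^ (8 * (k : ℤ) - 1) * FreeGroup.of 0 *
           ((FreeGroup.of 1) ^ (8 * (k : ℤ) - 1))⁻¹ * (FreeGroup.of 0)⁻¹,
         (FreeGroup.of 1) ^ (4 * (k : ℤ) - 2) * (FreeGroup.of 0)⁻¹ } :
        Set (FreeGroup (Fin 2))), x = 1 :=
  myRels_aux (k : ℤ)
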